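/- For κ < 0 and σ* > 0, the function Δ ↦ Ê(Δ, σ*) = −(1/κ)·ln(exp(κσ*) + exp(−κΔ)·(1 − exp(κσ*))) is convex on ℝ, i.e., its second derivative with respect to Δ is positive everywhere. -/

import Mathlib

theorem stmt_6 (κ σ : ℝ) (hκ : κ < 0) (hσ : 0 < σ)
    (E : ℝ → ℝ)
    (hE : ∀ Δ, E Δ =
      -(1/κ) * Real.log (Real.exp (κ * σ) + Real.exp (-κ * Δ) * (1 - Real.exp (κ * σ)))) :
    ConvexOn ℝ Set.univ E ∧ ∀ Δ : ℝ, 0 < deriv (deriv E) Δ := by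
  have hEeq : E = fun Δ =>
      -(1/κ) * Real.log (Real.exp (κ * σ) + Real.exp (-κ * Δ) * (1 - Real.exp (κ * σ))) :=
    funext hE
  set a := Real.exp (κ * σ) with ha
  set c := 1 - a with hc
  have ha0 : 0 < a := Real.exp_pos _
  have ha1 : a < 1 := by
    rw [ha]
    have : κ * σ < 0 := mul_neg_of_neg_of_pos hκ hσ
    simpa using Real.exp_lt_one_iff.mpr this
  have hc0 : 0 < c := by simp [hc]; linarith
  set u := -κ with hu
  have hu0 : 0 < u := by simp [hu]; linarith
  have hg0 : ∀ x : ℝ, 0 < a + Real.exp (u * x) * c := fun x => by positivity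
  -- first derivative
  have hd1 : ∀ x : ℝ, HasDerivAt E
      (Real.exp (u * x) * c / (a + Real.exp (u * x) * c)) x := by
    intro x
    rw [hEeq]
    have hg : HasDerivAt (fun y : ℝ => a + Real.exp (u * y) * c)
        ((Real.exp (u * x) * u) * c) x := by
      have h1 : HasDerivAt (fun y : ℝ => u * y) u x := by
        simpa using (hasDerivAt_id x).const_mul u
      exact (((h1.exp).mul_const c).const_add a)
    have := ((hg.log (hg0 x).ne').const_mul (-(1/κ)))
    have hnegκ : -(1/κ) = u⁻¹ := by rw [hu]; simp [inv_neg]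
    have heq : -(1/κ) * ((Real.exp (u * x) * u) * c / (a + Real.exp (u * x) * c))
        = Real.exp (u * x) * c / (a + Real.exp (u * x) * c) := by
      rw [hnegκ]
      field_simp
    rw [heq] at this
    exact this
  have hderivE : deriv E = fun x => Real.exp (u * x) * c / (a + Real.exp (u * x) * c) :=
    funext fun x => (hd1 x).deriv
  -- second derivative
  have hd2 : ∀ x : ℝ, HasDerivAt (deriv E)
      (Real.exp (u * x) * u * c * a / (a + Real.exp (u * x) * c) ^ 2) x := by
    intro x
    rw [hderivE]
    have h1 : HasDerivAt (fun y : ℝ => u * y) u x := by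
      simpa using (hasDerivAt_id x).const_mul u
    have hn : HasDerivAt (fun y : ℝ => Real.exp (u * y) * c)
        ((Real.exp (u * x) * u) * c) x := (h1.exp).mul_const c
    have hg : HasDerivAt (fun y : ℝ => a + Real.exp (u * y) * c)
        ((Real.exp (u * x) * u) * c) x := hn.const_add a
    have : HasDerivAt (fun y : ℝ => Real.exp (u * y) * c / (a + Real.exp (u * y) * c)) _ x :=
      hn.div hg (hg0 x).ne'
    convert this using 1
    ring
  have hpos : ∀ x : ℝ, 0 < deriv (deriv E) x := by
    intro x
    rw [(hd2 x).deriv]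
    positivity
  refine ⟨?_, hpos⟩
  apply convexOn_of_deriv2_nonneg convex_univ
  · exact (fun x _ => ((hd1 x).differentiableAt.continuousAt.continuousWithinAt))
  · exact fun x _ => ((hd1 x).differentiableAt.differentiableWithinAt)
  · exact fun x _ => ((hd2 x).differentiableAt.differentiableWithinAt)
  · intro x _
    simp only [Function.iterate_succ, Function.iterate_zero, Function.comp_apply, id]
    exact (hpos x).le
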